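/- Let R₁, R₂: R → SO(3) satisfy Ṙᵢ = Rᵢ·hat(Ωᵢ), let Q₂₁^d: R → SO(3) satisfy Q̇₂₁^d = Q₂₁^d·hat(Ω₂^d − (Q₂₁^d)ᵀΩ₁), and define Q₂₁^e = R₁ Q₂₁^d R₂ᵀ. Then Q̇₂₁^e = −R₁ Q₂₁^d · hat(Ω₂ − Ω₂^d) · R₂ᵀ. -/

import Mathlib

open Matrix

noncomputable def hat (x : Fin 3 → ℝ) : Matrix (Fin 3) (Fin 3) ℝ :=
  !![0, -x 2, x 1; x 2, 0, -x 0; -x 1, x 0, 0]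

noncomputable def vee (A : Matrix (Fin 3) (Fin 3) ℝ) : Fin 3 → ℝ := ![A 2 1, A 0 2, A 1 0]

def IsSO3 (R : Matrix (Fin 3) (Fin 3) ℝ) : Prop := Rᵀ * R = 1 ∧ R.det = 1

noncomputable def enorm3 (x : Fin 3 → ℝ) : ℝ := Real.sqrt (∑ i, x i ^ 2)

lemma hat_sub (a b : Fin 3 → ℝ) : hat (a - b) = hat a - hat b := by
  ext i j
  fin_cases i <;> fin_cases j <;> simp [hat] <;> ring

lemma hat_transpose (v : Fin 3 → ℝ) : (hat v)ᵀ = -hat v := by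
  ext i j
  fin_cases i <;> fin_cases j <;> simp [hat]

lemma hat_swap (Q : Matrix (Fin 3) (Fin 3) ℝ) (hQ : IsSO3 Q) (v : Fin 3 → ℝ) :
    hat v * Q = Q * hat (Qᵀ.mulVec v) := by
  have hinv : Q⁻¹ = Qᵀ := Matrix.inv_eq_left_inv hQ.1
  have hadj : Q.adjugate = Qᵀ := by
    rw [← hinv, Matrix.inv_def, hQ.2]
    simp
  rw [Matrix.adjugate_fin_three] at hadj
  have e00 : Q 1 1 * Q 2 2 - Q 1 2 * Q 2 1 = Q 0 0 := by
    simpa using congrFun (congrFun hadj 0) 0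
  have e01 : -(Q 0 1 * Q 2 2) + Q 0 2 * Q 2 1 = Q 1 0 := by
    simpa using congrFun (congrFun hadj 0) 1
  have e02 : Q 0 1 * Q 1 2 - Q 0 2 * Q 1 1 = Q 2 0 := by
    simpa using congrFun (congrFun hadj 0) 2
  have e10 : -(Q 1 0 * Q 2 2) + Q 1 2 * Q 2 0 = Q 0 1 := by
    simpa using congrFun (congrFun hadj 1) 0
  have e11 : Q 0 0 * Q 2 2 - Q 0 2 * Q 2 0 = Q 1 1 := by
    simpa using congrFun (congrFun hadj 1) 1
  have e12 : -(Q 0 0 * Q 1 2) + Q 0 2 * Q 1 0 = Q 2 1 := by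
    simpa using congrFun (congrFun hadj 1) 2
  have e20 : Q 1 0 * Q 2 1 - Q 1 1 * Q 2 0 = Q 0 2 := by
    simpa using congrFun (congrFun hadj 2) 0
  have e21 : -(Q 0 0 * Q 2 1) + Q 0 1 * Q 2 0 = Q 1 2 := by
    simpa using congrFun (congrFun hadj 2) 1
  have e22 : Q 0 0 * Q 1 1 - Q 0 1 * Q 1 0 = Q 2 2 := by
    simpa using congrFun (congrFun hadj 2) 2
  ext i j
  fin_cases i <;> fin_cases j <;>
    simp [hat, Matrix.mul_apply, Matrix.mulVec, dotProduct, Fin.sum_univ_three]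
  · linear_combination (-(-(v 2))) * e01 + (-(v 1)) * e02
  · linear_combination (-(-(v 2))) * e11 + (-(v 1)) * e12
  · linear_combination (-(-(v 2))) * e21 + (-(v 1)) * e22
  · linear_combination (-(v 2)) * e00 + (-(-(v 0))) * e02
  · linear_combination (-(v 2)) * e10 + (-(-(v 0))) * e12
  · linear_combination (-(v 2)) * e20 + (-(-(v 0))) * e22
  · linear_combination (-(-(v 1))) * e00 + (-(v 0)) * e01
  · linear_combination (-(-(v 1))) * e10 + (-(v 0)) * e11
  · linear_combination (-(-(v 1))) * e20 + (-(v 0)) * e21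

lemma key_identity (R₁ R₂ Q : Matrix (Fin 3) (Fin 3) ℝ) (hQ : IsSO3 Q)
    (v₁ v₂ v₂d : Fin 3 → ℝ) :
    R₁ * hat v₁ * Q * R₂ᵀ + R₁ * (Q * hat (v₂d - Qᵀ.mulVec v₁)) * R₂ᵀ
      + R₁ * Q * (R₂ * hat v₂)ᵀ = -(R₁ * Q * hat (v₂ - v₂d) * R₂ᵀ) := by
  have hswap := hat_swap Q hQ v₁
  rw [Matrix.transpose_mul, hat_transpose, hat_sub, hat_sub, Matrix.mul_assoc R₁ (hat v₁) Q,
    hswap]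
  noncomm_ring

theorem Qe_kinematics (Ω₁ Ω₂ Ω₂d : ℝ → Fin 3 → ℝ)
    (R₁ R₂ Q₂₁d : ℝ → Matrix (Fin 3) (Fin 3) ℝ)
    (hR₁ : ∀ t, IsSO3 (R₁ t)) (hR₂ : ∀ t, IsSO3 (R₂ t)) (hQ : ∀ t, IsSO3 (Q₂₁d t))
    (hR₁dot : ∀ t i j, HasDerivAt (fun τ => R₁ τ i j) ((R₁ t * hat (Ω₁ t)) i j) t)
    (hR₂dot : ∀ t i j, HasDerivAt (fun τ => R₂ τ i j) ((R₂ t * hat (Ω₂ t)) i j) t)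
    (hQdot : ∀ t i j, HasDerivAt (fun τ => Q₂₁d τ i j)
      ((Q₂₁d t * hat (Ω₂d t - (Q₂₁d t)ᵀ.mulVec (Ω₁ t))) i j) t) :
    ∀ t i j, HasDerivAt (fun τ => (R₁ τ * Q₂₁d τ * (R₂ τ)ᵀ) i j)
      ((-(R₁ t * Q₂₁d t * hat (Ω₂ t - Ω₂d t) * (R₂ t)ᵀ)) i j) t := by
  intro t i j
  have hD : HasDerivAt
      (fun τ => ∑ k, ∑ l, R₁ τ i l * Q₂₁d τ l k * R₂ τ j k)
      (∑ k, ∑ l, (((R₁ t * hat (Ω₁ t)) i l * Q₂₁d t l k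
          + R₁ t i l * (Q₂₁d t * hat (Ω₂d t - (Q₂₁d t)ᵀ.mulVec (Ω₁ t))) l k) * R₂ t j k
          + R₁ t i l * Q₂₁d t l k * (R₂ t * hat (Ω₂ t)) j k)) t := by
    apply HasDerivAt.fun_sum
    intro k _
    apply HasDerivAt.fun_sum
    intro l _
    exact ((hR₁dot t i l).mul (hQdot t l k)).mul (hR₂dot t j k)
  have hfun : (fun τ => (R₁ τ * Q₂₁d τ * (R₂ τ)ᵀ) i j)
      = fun τ => ∑ k, ∑ l, R₁ τ i l * Q₂₁d τ l k * R₂ τ j k := by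
    funext τ
    simp [Matrix.mul_apply, Matrix.transpose_apply, Finset.sum_mul]
  rw [hfun]
  have hkey := key_identity (R₁ t) (R₂ t) (Q₂₁d t) (hQ t) (Ω₁ t) (Ω₂ t) (Ω₂d t)
  rw [← hkey]
  convert hD using 1
  simp [Matrix.add_apply, Matrix.mul_apply, Matrix.transpose_apply, Fin.sum_univ_three]
  ring
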